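/- Let H > 0. For C > 2(H + √(1+H²)) define F(C) = ∫₀^{π} (1/C + H·(−q₂(C)·cos t − q₁(C))) / ((1 + q₁(C) + q₂(C)·cos t)·√(−q₂(C)·cos t − q₁(C))·√(1+H²)) dt, where q₁(C) = (2H − C)/(2C(1+H²)) and q₂(C) = √(C² − 4CH − 4)/(2C(1+H²)). Then F(C) tends to √2·π·(H + √(1+H²))^{3/2} / ((1+H²)^{1/4}·(1 + 2H² + 2H√(1+H²))) as C → (2(H + √(1+H²)))⁺. -/

import Mathlib

open Real Filter MeasureTheory intervalIntegral

private lemma stmt9_aux (H s c₀ : ℝ) (hH : 0 < H) (hs0 : 0 < s) (hs2 : s^2 = 1+H^2)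
    (hc₀ : c₀ = 2*(H+s)) :
    (1 / c₀ + H * (0 + (c₀ * s)⁻¹)) / ((1 + -(c₀ * s)⁻¹) * Real.sqrt (0 + (c₀ * s)⁻¹) * s) =
    Real.sqrt 2 * ((H + s) * Real.sqrt (H + s)) / (Real.sqrt s * (1 + 2 * H ^ 2 + 2 * H * s)) := by
  have hHs : 0 < H + s := by linarith
  have hc₀0 : 0 < c₀ := by rw [hc₀]; linarith
  have hD0 : (0:ℝ) < 1 + 2*H^2 + 2*H*s := by positivity
  have hb0 : 0 < Real.sqrt (H+s) := Real.sqrt_pos.2 hHs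
  have he0 : 0 < Real.sqrt s := Real.sqrt_pos.2 hs0
  have ha0 : 0 < Real.sqrt 2 := by positivity
  have hb2 : Real.sqrt (H+s)^2 = H+s := Real.sq_sqrt hHs.le
  have he2 : Real.sqrt s^2 = s := Real.sq_sqrt hs0.le
  have ha2 : Real.sqrt 2^2 = 2 := Real.sq_sqrt (by norm_num)
  have hsqrtc₀ : Real.sqrt (c₀ * s) = Real.sqrt 2 * Real.sqrt (H + s) * Real.sqrt s := by
    rw [hc₀, mul_assoc, Real.sqrt_mul (by norm_num : (0:ℝ) ≤ 2), Real.sqrt_mul hHs.le, mul_assoc]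
  rw [zero_add, Real.sqrt_inv, hsqrtc₀]
  have e1 : 1/c₀ + H * (c₀*s)⁻¹ = 1/(2*s) := by
    rw [hc₀]; field_simp; ring
  have e2 : 1 + -(c₀*s)⁻¹ = (1+2*H^2+2*H*s)/(c₀*s) := by
    rw [hc₀]; field_simp; linear_combination 2*hs2
  rw [e1, e2, hc₀]
  field_simp
  linear_combination he2


/-- For `H > 0`, the closed-form period integral `F C` tends to
`√2 π (H+√(1+H²))^{3/2} / ((1+H²)^{1/4}(1+2H²+2H√(1+H²)))` as
`C → (2(H+√(1+H²)))⁺`. -/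
theorem stmt_9 (H : ℝ) (hH : 0 < H) (F : ℝ → ℝ)
    (hF : ∀ C : ℝ, 2 * (H + Real.sqrt (1 + H ^ 2)) < C →
      F C = ∫ t in (0 : ℝ)..Real.pi,
        (1 / C + H * (-(Real.sqrt (C ^ 2 - 4 * C * H - 4) / (2 * C * (1 + H ^ 2))) * Real.cos t
          - (2 * H - C) / (2 * C * (1 + H ^ 2))))
        / ((1 + (2 * H - C) / (2 * C * (1 + H ^ 2))
            + (Real.sqrt (C ^ 2 - 4 * C * H - 4) / (2 * C * (1 + H ^ 2))) * Real.cos t)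
          * Real.sqrt (-(Real.sqrt (C ^ 2 - 4 * C * H - 4) / (2 * C * (1 + H ^ 2))) * Real.cos t
            - (2 * H - C) / (2 * C * (1 + H ^ 2)))
          * Real.sqrt (1 + H ^ 2))) :
    Filter.Tendsto F
      (nhdsWithin (2 * (H + Real.sqrt (1 + H ^ 2)))
        (Set.Ioi (2 * (H + Real.sqrt (1 + H ^ 2)))))
      (nhds (Real.sqrt 2 * Real.pi * (H + Real.sqrt (1 + H ^ 2)) ^ ((3 : ℝ) / 2)
        / ((1 + H ^ 2) ^ ((1 : ℝ) / 4) * (1 + 2 * H ^ 2 + 2 * H * Real.sqrt (1 + H ^ 2))))) := by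
  have h1H : (0:ℝ) < 1 + H ^ 2 := by positivity
  set s := Real.sqrt (1 + H ^ 2) with hs_def
  have hs0 : 0 < s := Real.sqrt_pos.2 h1H
  have hs2 : s ^ 2 = 1 + H ^ 2 := Real.sq_sqrt h1H.le
  set c₀ := 2 * (H + s) with hc₀_def
  have hHs : 0 < H + s := by linarith
  have hc₀H : 2 * H < c₀ := by nlinarith
  have hc₀0 : 0 < c₀ := by nlinarith
  set ψ : ℝ → ℝ := fun C => max c₀ (min C (c₀ + 1)) with hψ_def
  have hψc : Continuous ψ := continuous_const.max (continuous_id.min continuous_const)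
  have hψge : ∀ C, c₀ ≤ ψ C := fun C => le_max_left _ _
  have hψ0 : ∀ C, 0 < ψ C := fun C => lt_of_lt_of_le hc₀0 (hψge C)
  have hψne : ∀ C, ψ C ≠ 0 := fun C => (hψ0 C).ne'
  -- key inequalities
  have hrlt : ∀ c : ℝ, c₀ ≤ c → Real.sqrt (c ^ 2 - 4 * c * H - 4) < c - 2 * H := by
    intro c hc
    rw [Real.sqrt_lt' (by linarith)]
    nlinarith
  have hB : ∀ c : ℝ, c₀ ≤ c → ∀ t : ℝ,
      0 < -(Real.sqrt (c ^ 2 - 4 * c * H - 4) / (2 * c * (1 + H ^ 2))) * Real.cos t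
        - (2 * H - c) / (2 * c * (1 + H ^ 2)) := by
    intro c hc t
    have hc0 : 0 < c := lt_of_lt_of_le hc₀0 hc
    have hD : (0:ℝ) < 2 * c * (1 + H ^ 2) := by positivity
    have hr := hrlt c hc
    have hrn := Real.sqrt_nonneg (c ^ 2 - 4 * c * H - 4)
    have hcos1 := Real.cos_le_one t
    have hcos2 := Real.neg_one_le_cos t
    have key : -(Real.sqrt (c ^ 2 - 4 * c * H - 4) / (2 * c * (1 + H ^ 2))) * Real.cos t
        - (2 * H - c) / (2 * c * (1 + H ^ 2))
        = (c - 2 * H - Real.sqrt (c ^ 2 - 4 * c * H - 4) * Real.cos t) / (2 * c * (1 + H ^ 2)) := by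
      field_simp
      ring
    rw [key]
    apply div_pos _ hD
    nlinarith
  have hA : ∀ c : ℝ, c₀ ≤ c → ∀ t : ℝ,
      0 < 1 + (2 * H - c) / (2 * c * (1 + H ^ 2))
        + (Real.sqrt (c ^ 2 - 4 * c * H - 4) / (2 * c * (1 + H ^ 2))) * Real.cos t := by
    intro c hc t
    have hc0 : 0 < c := lt_of_lt_of_le hc₀0 hc
    have hD : (0:ℝ) < 2 * c * (1 + H ^ 2) := by positivity
    have hr := hrlt c hc
    have hrn := Real.sqrt_nonneg (c ^ 2 - 4 * c * H - 4)
    have hcos1 := Real.cos_le_one t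
    have hcos2 := Real.neg_one_le_cos t
    have key : 1 + (2 * H - c) / (2 * c * (1 + H ^ 2))
        + (Real.sqrt (c ^ 2 - 4 * c * H - 4) / (2 * c * (1 + H ^ 2))) * Real.cos t
        = (2 * c * (1 + H ^ 2) + (2 * H - c) + Real.sqrt (c ^ 2 - 4 * c * H - 4) * Real.cos t)
          / (2 * c * (1 + H ^ 2)) := by
      field_simp
    rw [key]
    apply div_pos _ hD
    nlinarith
  -- the modified integrand
  set f : ℝ → ℝ → ℝ := fun C t =>
    (1 / ψ C + H * (-(Real.sqrt ((ψ C) ^ 2 - 4 * (ψ C) * H - 4) / (2 * (ψ C) * (1 + H ^ 2))) * Real.cos t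
      - (2 * H - ψ C) / (2 * (ψ C) * (1 + H ^ 2))))
    / ((1 + (2 * H - ψ C) / (2 * (ψ C) * (1 + H ^ 2))
        + (Real.sqrt ((ψ C) ^ 2 - 4 * (ψ C) * H - 4) / (2 * (ψ C) * (1 + H ^ 2))) * Real.cos t)
      * Real.sqrt (-(Real.sqrt ((ψ C) ^ 2 - 4 * (ψ C) * H - 4) / (2 * (ψ C) * (1 + H ^ 2))) * Real.cos t
        - (2 * H - ψ C) / (2 * (ψ C) * (1 + H ^ 2)))
      * s) with hf_def
  have hDne : ∀ C : ℝ, 2 * ψ C * (1 + H ^ 2) ≠ 0 := by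
    intro C
    have := hψ0 C
    positivity
  have hψfst : Continuous fun p : ℝ × ℝ => ψ p.1 := hψc.comp continuous_fst
  have hpoly : Continuous fun p : ℝ × ℝ => (ψ p.1) ^ 2 - 4 * (ψ p.1) * H - 4 :=
    ((hψfst.pow 2).sub ((continuous_const.mul hψfst).mul continuous_const)).sub continuous_const
  have hDcont : Continuous fun p : ℝ × ℝ => 2 * ψ p.1 * (1 + H ^ 2) :=
    (continuous_const.mul hψfst).mul continuous_const
  have hq2cont : Continuous fun p : ℝ × ℝ =>
      Real.sqrt ((ψ p.1) ^ 2 - 4 * (ψ p.1) * H - 4) / (2 * (ψ p.1) * (1 + H ^ 2)) :=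
    (Real.continuous_sqrt.comp hpoly).div hDcont fun p => hDne p.1
  have hq1cont : Continuous fun p : ℝ × ℝ =>
      (2 * H - ψ p.1) / (2 * (ψ p.1) * (1 + H ^ 2)) :=
    (continuous_const.sub hψfst).div hDcont fun p => hDne p.1
  have hcoscont : Continuous fun p : ℝ × ℝ => Real.cos p.2 :=
    Real.continuous_cos.comp continuous_snd
  have hcont : Continuous fun p : ℝ × ℝ => f p.1 p.2 := by
    apply Continuous.div
    · exact (continuous_const.div hψfst fun p => hψne p.1).add
        (continuous_const.mul ((hq2cont.neg.mul hcoscont).sub hq1cont))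
    · exact (((continuous_const.add hq1cont).add (hq2cont.mul hcoscont)).mul
        (Real.continuous_sqrt.comp ((hq2cont.neg.mul hcoscont).sub hq1cont))).mul continuous_const
    · intro p
      exact ne_of_gt (mul_pos (mul_pos (hA (ψ p.1) (hψge p.1) p.2)
        (Real.sqrt_pos.2 (hB (ψ p.1) (hψge p.1) p.2))) hs0)
  have hG : Continuous fun C => ∫ t in (0:ℝ)..Real.pi, f C t :=
    intervalIntegral.continuous_parametric_intervalIntegral_of_continuous' (f := f)
      (μ := MeasureTheory.volume) hcont 0 Real.pi
  -- F equals the integral of f near c₀ from the right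
  have hmem : Set.Ioo c₀ (c₀ + 1) ∈ nhdsWithin c₀ (Set.Ioi c₀) :=
    Ioo_mem_nhdsGT_of_mem ⟨le_rfl, by linarith⟩
  have heq : F =ᶠ[nhdsWithin c₀ (Set.Ioi c₀)] fun C => ∫ t in (0:ℝ)..Real.pi, f C t := by
    filter_upwards [hmem] with C hC
    have hψC : ψ C = C := by
      rw [hψ_def]
      simp only
      rw [min_eq_left hC.2.le, max_eq_right hC.1.le]
    rw [hF C hC.1]
    simp only [hf_def, hψC]
  -- value at c₀
  have hψc₀ : ψ c₀ = c₀ := by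
    rw [hψ_def]
    simp only
    rw [min_eq_left (by linarith), max_self]
  have hzero : c₀ ^ 2 - 4 * c₀ * H - 4 = 0 := by nlinarith
  have hq10 : (2 * H - c₀) / (2 * c₀ * (1 + H ^ 2)) = -(c₀ * s)⁻¹ := by
    rw [hc₀_def]
    rw [← hs2]
    field_simp
    ring
  have hD0 : (0:ℝ) < 1 + 2 * H ^ 2 + 2 * H * s := by positivity
  have hsqrtc₀ : Real.sqrt (c₀ * s) = Real.sqrt 2 * Real.sqrt (H + s) * Real.sqrt s := by
    rw [hc₀_def, mul_assoc, Real.sqrt_mul (by norm_num : (0:ℝ) ≤ 2),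
      Real.sqrt_mul hHs.le, mul_assoc]
  have hKconst : ∀ t : ℝ, f c₀ t
      = Real.sqrt 2 * ((H + s) * Real.sqrt (H + s)) / (Real.sqrt s * (1 + 2 * H ^ 2 + 2 * H * s)) := by
    intro t
    simp only [hf_def, hψc₀, hzero, Real.sqrt_zero, zero_div, neg_zero, zero_mul, hq10,
      add_zero, zero_sub, neg_neg, sub_neg_eq_add]
    exact stmt9_aux H s c₀ hH hs0 hs2 hc₀_def
  have hintval : (∫ t in (0:ℝ)..Real.pi, f c₀ t)
      = Real.sqrt 2 * Real.pi * (H + s) ^ ((3:ℝ) / 2)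
        / ((1 + H ^ 2) ^ ((1:ℝ) / 4) * (1 + 2 * H ^ 2 + 2 * H * s)) := by
    have h4 : (1 + H ^ 2) ^ ((1:ℝ) / 4) = Real.sqrt s := by
      rw [← hs2, ← Real.rpow_natCast s 2, ← Real.rpow_mul hs0.le]
      norm_num
      rw [← Real.sqrt_eq_rpow]
    have h32 : (H + s) ^ ((3:ℝ) / 2) = (H + s) * Real.sqrt (H + s) := by
      rw [show (3:ℝ)/2 = 1 + 1/2 by norm_num, Real.rpow_add hHs, Real.rpow_one,
        ← Real.sqrt_eq_rpow]
    simp only [hKconst]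
    rw [intervalIntegral.integral_const, h4, h32]
    rw [smul_eq_mul, sub_zero]
    ring
  have htend : Tendsto (fun C => ∫ t in (0:ℝ)..Real.pi, f C t)
      (nhdsWithin c₀ (Set.Ioi c₀))
      (nhds (Real.sqrt 2 * Real.pi * (H + s) ^ ((3:ℝ) / 2)
        / ((1 + H ^ 2) ^ ((1:ℝ) / 4) * (1 + 2 * H ^ 2 + 2 * H * s)))) := by
    rw [← hintval]
    exact (hG.tendsto c₀).mono_left nhdsWithin_le_nhds
  exact htend.congr' heq.symm
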